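/- A neighborhood pattern of finite size at least 2 is not decomposable if and only if it is a path pattern. -/

import Mathlib

/-- A labeled graph over vertex-label alphabet `SV` and edge-label alphabet `SE`:
a vertex set, a set of vertex labels, and a set of labeled edges with no loops. -/
structure LabeledGraph (V SV SE : Type*) where
  verts : Set V
  labels : Set (V × SV)
  edges : Set (V × V × SE)
  labels_sub : ∀ ⦃p : V × SV⦄, p ∈ labels → p.1 ∈ verts
  edges_sub : ∀ ⦃q : V × V × SE⦄, q ∈ edges → q.1 ∈ verts ∧ q.2.1 ∈ verts
  no_loops : ∀ ⦃q : V × V × SE⦄, q ∈ edges → q.1 ≠ q.2.1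

/-- An element of a labeled graph: a vertex label or a labeled edge. -/
abbrev GraphElement (V SV SE : Type*) := (V × SV) ⊕ (V × V × SE)

namespace LabeledGraph

variable {V SV SE : Type*}

/-- Adjacency, ignoring edge directions. -/
def Adj (G : LabeledGraph V SV SE) (x y : V) : Prop :=
  ∃ l, (x, y, l) ∈ G.edges ∨ (y, x, l) ∈ G.edges

/-- The size of a labeled graph: number of vertex labels plus number of labeled edges. -/
noncomputable def size (G : LabeledGraph V SV SE) : ℕ := G.labels.ncard + G.edges.ncard

/-- Membership of an element in a labeled graph. -/
def HasElement (G : LabeledGraph V SV SE) : GraphElement V SV SE → Prop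
  | Sum.inl p => p ∈ G.labels
  | Sum.inr q => q ∈ G.edges

/-- A vertex is occupied (not isolated) w.r.t. given label and edge sets if it
carries some vertex label or is incident to some labeled edge. -/
def Occupied (labels : Set (V × SV)) (edges : Set (V × V × SE)) (x : V) : Prop :=
  (∃ l, (x, l) ∈ labels) ∨ (∃ u l, (x, u, l) ∈ edges ∨ (u, x, l) ∈ edges)

/-- The vertex labels remaining after deleting an element. -/
def delLabels (G : LabeledGraph V SV SE) : GraphElement V SV SE → Set (V × SV)
  | Sum.inl p => G.labels \ {p}
  | Sum.inr _ => G.labels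

/-- The labeled edges remaining after deleting an element. -/
def delEdges (G : LabeledGraph V SV SE) : GraphElement V SV SE → Set (V × V × SE)
  | Sum.inl _ => G.edges
  | Sum.inr q => G.edges \ {q}

lemma delLabels_subset (G : LabeledGraph V SV SE) (e : GraphElement V SV SE) :
    G.delLabels e ⊆ G.labels := by
  cases e with
  | inl p => exact Set.diff_subset
  | inr q => exact subset_rfl

lemma delEdges_subset (G : LabeledGraph V SV SE) (e : GraphElement V SV SE) :
    G.delEdges e ⊆ G.edges := by
  cases e with
  | inl p => exact subset_rfl
  | inr q => exact Set.diff_subset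

/-- Removing an element from a labeled graph: delete that vertex label or labeled
edge, and additionally delete any vertex thereby left isolated. -/
def removeElement (G : LabeledGraph V SV SE) (e : GraphElement V SV SE) :
    LabeledGraph V SV SE where
  verts := {x ∈ G.verts |
    Occupied (G.delLabels e) (G.delEdges e) x ∨ ¬ Occupied G.labels G.edges x}
  labels := G.delLabels e
  edges := G.delEdges e
  labels_sub := fun p hp =>
    ⟨G.labels_sub (G.delLabels_subset e hp), Or.inl (Or.inl ⟨p.2, hp⟩)⟩
  edges_sub := fun q hq =>
    ⟨⟨(G.edges_sub (G.delEdges_subset e hq)).1,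
        Or.inl (Or.inr ⟨q.2.1, q.2.2, Or.inl hq⟩)⟩,
      ⟨(G.edges_sub (G.delEdges_subset e hq)).2,
        Or.inl (Or.inr ⟨q.1, q.2.2, Or.inr hq⟩)⟩⟩
  no_loops := fun q hq => G.no_loops (G.delEdges_subset e hq)

/-- Connectivity of a (non-pivoted) labeled graph: every pair of its vertices is
joined by a path of edges, ignoring edge directions. -/
def ConnectedGraph (G : LabeledGraph V SV SE) : Prop :=
  ∀ x ∈ G.verts, ∀ y ∈ G.verts, Relation.ReflTransGen G.Adj x y

/-- A leaf vertex: incident to exactly one labeled edge. -/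
def IsLeafVertex (G : LabeledGraph V SV SE) (x : V) : Prop :=
  ∃! q : V × V × SE, q ∈ G.edges ∧ (q.1 = x ∨ q.2.1 = x)

/-- A cycle in the underlying undirected multigraph: a closed walk
`ws` using pairwise distinct labeled edges `es`. -/
def IsCycle (G : LabeledGraph V SV SE) (es : List (V × V × SE)) (ws : List V) : Prop :=
  es ≠ [] ∧ es.Nodup ∧
  ws.length = es.length + 1 ∧ ws.head? = ws.getLast? ∧
  ∀ i q, es[i]? = some q → q ∈ G.edges ∧
    ∃ u w, ws[i]? = some u ∧ ws[i+1]? = some w ∧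
      ((q.1 = u ∧ q.2.1 = w) ∨ (q.1 = w ∧ q.2.1 = u))

end LabeledGraph

/-- A pivoted graph: a labeled graph with a distinguished vertex, the pivot. -/
structure PivotedGraph (V SV SE : Type*) extends LabeledGraph V SV SE where
  pivot : V
  pivot_mem : pivot ∈ verts

/-- Pivoted subgraph isomorphism `P₁ ⊆_f P₂`: an injective map on vertices preserving
vertex labels and labeled edges and sending pivot to pivot. -/
def PSubIso {V₁ V₂ SV SE : Type*}
    (P₁ : PivotedGraph V₁ SV SE) (P₂ : PivotedGraph V₂ SV SE) : Prop :=
  ∃ f : V₁ → V₂,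
    Set.MapsTo f P₁.verts P₂.verts ∧
    Set.InjOn f P₁.verts ∧
    (∀ ⦃x : V₁⦄ ⦃l : SV⦄, (x, l) ∈ P₁.labels → (f x, l) ∈ P₂.labels) ∧
    (∀ ⦃x y : V₁⦄ ⦃l : SE⦄, (x, y, l) ∈ P₁.edges → (f x, f y, l) ∈ P₂.edges) ∧
    f P₁.pivot = P₂.pivot

/-- The match set `M_G(P)`: all vertices `v` of `G` such that `P ⊆_f ⟨G, v⟩`. -/
def matchSet {V V' SV SE : Type*} (G : LabeledGraph V SV SE)
    (P : PivotedGraph V' SV SE) : Set V :=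
  {x | ∃ hx : x ∈ G.verts, PSubIso P ⟨G, x, hx⟩}

namespace PivotedGraph

variable {V SV SE : Type*}

/-- A pivoted graph is connected if every vertex is joined to the pivot by a path
of edges, ignoring edge directions. (A neighborhood pattern is a connected
pivoted graph.) -/
def Connected (P : PivotedGraph V SV SE) : Prop :=
  ∀ x ∈ P.verts, Relation.ReflTransGen P.toLabeledGraph.Adj x P.pivot

/-- Removing the element `e` from `P` yields a connected pivoted graph (with the
same pivot). -/
def ConnectedAfterRemove (P : PivotedGraph V SV SE) (e : GraphElement V SV SE) : Prop :=
  P.pivot ∈ (P.toLabeledGraph.removeElement e).verts ∧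
  ∀ x ∈ (P.toLabeledGraph.removeElement e).verts,
    Relation.ReflTransGen (P.toLabeledGraph.removeElement e).Adj x P.pivot

/-- A neighborhood pattern is decomposable if it has two distinct elements such that
removing either one yields a connected pivoted graph. -/
def Decomposable (P : PivotedGraph V SV SE) : Prop :=
  ∃ e₁ e₂ : GraphElement V SV SE, e₁ ≠ e₂ ∧
    P.toLabeledGraph.HasElement e₁ ∧ P.toLabeledGraph.HasElement e₂ ∧
    P.ConnectedAfterRemove e₁ ∧ P.ConnectedAfterRemove e₂

/-- A path pattern: the edges, with directions ignored, form a simple path (given by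
the list of vertices `vs`) having the pivot as one endpoint, with at most one vertex
label, which (if present) is on the other endpoint of the path. -/
def IsPathPattern (P : PivotedGraph V SV SE) : Prop :=
  ∃ vs : List V,
    vs ≠ [] ∧ vs.Nodup ∧ vs.head? = some P.pivot ∧
    P.verts = {x | x ∈ vs} ∧
    (∀ q ∈ P.edges, ∃ i u w, vs[i]? = some u ∧ vs[i + 1]? = some w ∧
      ((q.1 = u ∧ q.2.1 = w) ∨ (q.1 = w ∧ q.2.1 = u))) ∧
    (∀ i u w, vs[i]? = some u → vs[i + 1]? = some w →
      ∃! q : V × V × SE, q ∈ P.edges ∧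
        ((q.1 = u ∧ q.2.1 = w) ∨ (q.1 = w ∧ q.2.1 = u))) ∧
    P.labels.Subsingleton ∧
    (∀ p ∈ P.labels, vs.getLast? = some p.1)

end PivotedGraph

/-- An injective match of a labeled graph pattern `P` in a labeled graph `G`:
an injective map from the vertices of `P` to those of `G` carrying vertex labels
to vertex labels and labeled edges to labeled edges. -/
def MatchOn {V V' SV SE : Type*} (P : LabeledGraph V' SV SE) (G : LabeledGraph V SV SE)
    (f : P.verts → V) : Prop :=
  (∀ x, f x ∈ G.verts) ∧ Function.Injective f ∧
  (∀ ⦃p : V' × SV⦄ (hp : p ∈ P.labels), (f ⟨p.1, P.labels_sub hp⟩, p.2) ∈ G.labels) ∧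
  (∀ ⦃q : V' × V' × SE⦄ (hq : q ∈ P.edges),
    (f ⟨q.1, (P.edges_sub hq).1⟩, f ⟨q.2.1, (P.edges_sub hq).2⟩, q.2.2) ∈ G.edges)


section Infra
open Relation List

variable {V SV SE : Type*}

/-- undirected adjacency generated by an edge set -/
def adjOn (E : Set (V × V × SE)) (x y : V) : Prop :=
  ∃ l, (x, y, l) ∈ E ∨ (y, x, l) ∈ E

/-- the (unordered) endpoints of an edge triple -/
def Joins (q : V × V × SE) (u w : V) : Prop :=
  (q.1 = u ∧ q.2.1 = w) ∨ (q.1 = w ∧ q.2.1 = u)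

lemma joins_symm {q : V × V × SE} {u w : V} (h : Joins q u w) : Joins q w u := Or.symm h

lemma joins_self {q : V × V × SE} : Joins q q.1 q.2.1 := Or.inl ⟨rfl, rfl⟩

lemma adjOn_symm {E : Set (V × V × SE)} {x y : V} (h : adjOn E x y) : adjOn E y x := by
  obtain ⟨l, h⟩ := h; exact ⟨l, h.symm⟩

lemma adjOn_iff {E : Set (V × V × SE)} {x y : V} :
    adjOn E x y ↔ ∃ q ∈ E, Joins q x y := by
  constructor
  · rintro ⟨l, h | h⟩
    · exact ⟨(x, y, l), h, Or.inl ⟨rfl, rfl⟩⟩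
    · exact ⟨(y, x, l), h, Or.inr ⟨rfl, rfl⟩⟩
  · rintro ⟨q, hq, h | h⟩
    · exact ⟨q.2.2, Or.inl (by rw [← h.1, ← h.2]; exact hq)⟩
    · exact ⟨q.2.2, Or.inr (by rw [← h.1, ← h.2]; exact hq)⟩

lemma adjOn_of_joins {E : Set (V × V × SE)} {q : V × V × SE} {x y : V}
    (hq : q ∈ E) (h : Joins q x y) : adjOn E x y := adjOn_iff.2 ⟨q, hq, h⟩

lemma adjOn_mono {E E' : Set (V × V × SE)} (hEE : E' ⊆ E) {x y : V}
    (h : adjOn E' x y) : adjOn E x y := by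
  obtain ⟨l, h | h⟩ := h
  · exact ⟨l, Or.inl (hEE h)⟩
  · exact ⟨l, Or.inr (hEE h)⟩

lemma rtg_adjOn_symm {E : Set (V × V × SE)} {x y : V}
    (h : Relation.ReflTransGen (adjOn E) x y) : Relation.ReflTransGen (adjOn E) y x :=
  (@Relation.ReflTransGen.stdSymm _ _ ⟨fun _ _ => adjOn_symm⟩).symm _ _ h

lemma rtg_adjOn_mono {E E' : Set (V × V × SE)} (hEE : E' ⊆ E) {x y : V}
    (h : Relation.ReflTransGen (adjOn E') x y) : Relation.ReflTransGen (adjOn E) x y :=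
  h.lift id (fun _ _ hab => adjOn_mono hEE hab)

/-- rerouting: if the endpoints of `q` are joined avoiding `q`, any connection in `E`
yields a connection in `E \ {q}`. -/
lemma rtg_del {E : Set (V × V × SE)} {q : V × V × SE}
    (hd : Relation.ReflTransGen (adjOn (E \ {q})) q.1 q.2.1) {x y : V}
    (h : Relation.ReflTransGen (adjOn E) x y) :
    Relation.ReflTransGen (adjOn (E \ {q})) x y := by
  induction h with
  | refl => exact .refl
  | tail _ hbc ih =>
    rename_i b c _
    obtain ⟨f, hf, hj⟩ := adjOn_iff.1 hbc
    by_cases hfq : f = q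
    · subst hfq
      rcases hj with ⟨h1, h2⟩ | ⟨h1, h2⟩
      · exact ih.trans (h1 ▸ h2 ▸ hd)
      · exact ih.trans (h1 ▸ h2 ▸ rtg_adjOn_symm hd)
    · exact ih.tail (adjOn_of_joins (q := f) ⟨hf, hfq⟩ hj)

/-- a chain can be shortened to start at any of its members -/
lemma chain_shorten {r : V → V → Prop} :
    ∀ (l : List V) (b a : V), List.Chain r b l → a ∈ l →
      ∃ l', l'.length < l.length ∧ List.Chain r a l' ∧ (a :: l').getLast? = (b :: l).getLast? := by
  intro l
  induction l with
  | nil => intro b a _ h; simp at h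
  | cons x xs ih =>
    intro b a hch hmem
    simp only [List.Chain, List.isChain_cons_cons] at hch
    rcases List.mem_cons.1 hmem with rfl | hmem
    · exact ⟨xs, by simp, hch.2, by rw [List.getLast?_cons_cons]⟩
    · obtain ⟨l', h1, h2, h3⟩ := ih x a hch.2 hmem
      exact ⟨l', h1.trans (by simp), h2, by rw [h3, List.getLast?_cons_cons]⟩

/-- connectivity along a segment of a chain, avoiding an edge `f` with an endpoint in the
avoided set `S`. -/
lemma seg_rtg {E : Set (V × V × SE)} {vs : List V} (hch : List.Chain' (adjOn E) vs)
    {f : V × V × SE} {S : Set V} (hfS : f.1 ∈ S ∨ f.2.1 ∈ S)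
    {i k : ℕ} (hik : i ≤ k) (hk : k < vs.length)
    (havoid : ∀ j (hj : j < vs.length), i ≤ j → j ≤ k → vs[j] ∉ S) :
    Relation.ReflTransGen (adjOn (E \ {f})) (vs[i]'(lt_of_le_of_lt hik hk)) (vs[k]'hk) := by
  induction k, hik using Nat.le_induction with
  | base => exact .refl
  | succ k hik ih =>
    have hk' : k < vs.length := by omega
    refine (ih hk' (fun j hj h1 h2 => havoid j hj h1 (by omega))).tail ?_
    have hadj : adjOn E (vs[k]'hk') (vs[k+1]'hk) := by
      have := List.isChain_iff_getElem.1 hch k (by omega)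
      simpa [List.get_eq_getElem] using this
    obtain ⟨g, hg, hjg⟩ := adjOn_iff.1 hadj
    refine adjOn_of_joins (q := g) ⟨hg, ?_⟩ hjg
    rintro rfl
    have h1 := havoid k hk' (by omega) (by omega)
    have h2 := havoid (k+1) hk (by omega) (by omega)
    rcases hjg with ⟨e1, e2⟩ | ⟨e1, e2⟩ <;> rcases hfS with hS | hS <;>
      simp_all

/-- if an edge `q` has a detour avoiding itself, then some *other* edge has a detour
avoiding itself. -/
lemma exists_second_nonbridge {E : Set (V × V × SE)}
    (hnol : ∀ ⦃f : V × V × SE⦄, f ∈ E → f.1 ≠ f.2.1) {q : V × V × SE} (hq : q ∈ E)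
    (hd : Relation.ReflTransGen (adjOn (E \ {q})) q.1 q.2.1) :
    ∃ e ∈ E, e ≠ q ∧ Relation.ReflTransGen (adjOn (E \ {e})) e.1 e.2.1 := by
  obtain ⟨l, hl1, hl2⟩ := List.exists_isChain_cons_of_relationReflTransGen hd
  have hl2' : (q.1 :: l).getLast? = some q.2.1 := by
    rw [List.getLast?_eq_getLast (l := q.1 :: l) (by simp), hl2]
  clear hl2 hd
  have main : ∀ n (l : List V), l.length ≤ n → List.Chain (adjOn (E \ {q})) q.1 l →
      (q.1 :: l).getLast? = some q.2.1 →
      ∃ e ∈ E, e ≠ q ∧ Relation.ReflTransGen (adjOn (E \ {e})) e.1 e.2.1 := by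
    intro n
    induction n with
    | zero =>
      intro l hlen _ hlast
      have : l = [] := List.length_eq_zero_iff.1 (Nat.le_zero.1 hlen)
      subst this
      simp at hlast
      exact absurd hlast (hnol hq)
    | succ n ih =>
      intro l hlen hch hlast
      match l with
      | [] =>
        simp at hlast
        exact absurd hlast (hnol hq)
      | c :: rest =>
        by_cases hm : q.1 ∈ c :: rest
        · obtain ⟨l', h1, h2, h3⟩ := chain_shorten (c :: rest) q.1 q.1 hch hm
          exact ih l' (by simp only [List.length_cons] at hlen h1 ⊢; omega) h2 (h3.trans hlast)
        · simp only [List.Chain, List.isChain_cons_cons] at hch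
          obtain ⟨f, hf, hjf⟩ := adjOn_iff.1 hch.1
          have hfq : f ≠ q := hf.2
          have hfE : f ∈ E := hf.1
          -- connectivity from c to q.2.1 avoiding f (within E \ {q})
          have hchain' : List.Chain' (adjOn (E \ {q})) (c :: rest) := hch.2
          have hclast : (c :: rest).getLast? = some q.2.1 := by
            rw [← hlast, List.getLast?_cons_cons]
          have hlen' : (c :: rest).length - 1 < (c :: rest).length := by simp
          have hfS : f.1 ∈ ({q.1} : Set V) ∨ f.2.1 ∈ ({q.1} : Set V) := by
            rcases hjf with ⟨h1, _⟩ | ⟨_, h2⟩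
            · exact Or.inl (by simp [h1])
            · exact Or.inr (by simp [h2])
          have hseg := seg_rtg hchain' hfS (Nat.zero_le _) hlen'
            (fun j hj _ _ => by
              simp only [Set.mem_singleton_iff]
              intro hEq
              exact hm (hEq ▸ List.getElem_mem hj))
          have hgl : (c :: rest)[(c :: rest).length - 1]'hlen' = q.2.1 := by
            have := List.getLast?_eq_getElem? (l := c :: rest)
            rw [hclast, List.getElem?_eq_getElem hlen'] at this
            exact (Option.some_injective _ this.symm)
          rw [hgl] at hseg
          have hseg2 : Relation.ReflTransGen (adjOn (E \ {f})) c q.2.1 :=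
            rtg_adjOn_mono (by intro x hx; exact ⟨hx.1.1, hx.2⟩) hseg
          have hstep : adjOn (E \ {f}) q.1 q.2.1 :=
            adjOn_of_joins (q := q) ⟨hq, fun h => hfq h.symm⟩ joins_self
          have hrtg : Relation.ReflTransGen (adjOn (E \ {f})) q.1 c :=
            (Relation.ReflTransGen.single hstep).trans (rtg_adjOn_symm hseg2)
          refine ⟨f, hfE, hfq, ?_⟩
          rcases hjf with ⟨h1, h2⟩ | ⟨h1, h2⟩
          · rw [h1, h2]; exact hrtg
          · rw [h1, h2]; exact rtg_adjOn_symm hrtg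
  exact main l.length l le_rfl hl1 hl2'

end Infra

section Level2
open Relation List LabeledGraph

variable {V SV SE : Type*}

lemma adj_eq (G : LabeledGraph V SV SE) : G.Adj = adjOn G.edges := rfl

lemma remove_adj_inr (G : LabeledGraph V SV SE) (q : V × V × SE) :
    (G.removeElement (Sum.inr q)).Adj = adjOn (G.edges \ {q}) := rfl

lemma remove_adj_inl (G : LabeledGraph V SV SE) (p : V × SV) :
    (G.removeElement (Sum.inl p)).Adj = adjOn G.edges := rfl

lemma eq_of_two_removable {P : PivotedGraph V SV SE} (hnd : ¬ P.Decomposable)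
    {e₁ e₂ : GraphElement V SV SE} (h1 : P.toLabeledGraph.HasElement e₁)
    (h2 : P.toLabeledGraph.HasElement e₂) (r1 : P.ConnectedAfterRemove e₁)
    (r2 : P.ConnectedAfterRemove e₂) : e₁ = e₂ := by
  by_contra hne
  exact hnd ⟨e₁, e₂, hne, h1, h2, r1, r2⟩

lemma occupied_of_edge {L : Set (V × SV)} {E : Set (V × V × SE)} {q : V × V × SE}
    (hq : q ∈ E) {x : V} (hx : q.1 = x ∨ q.2.1 = x) : Occupied L E x := by
  rcases hx with rfl | rfl
  · exact Or.inr ⟨q.2.1, q.2.2, Or.inl hq⟩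
  · exact Or.inr ⟨q.1, q.2.2, Or.inr hq⟩

lemma occupied_of_adjOn {L : Set (V × SV)} {E : Set (V × V × SE)} {x y : V}
    (h : adjOn E x y) : Occupied L E x := by
  obtain ⟨q, hq, hj⟩ := adjOn_iff.1 h
  rcases hj with ⟨h1, _⟩ | ⟨_, h2⟩
  · exact occupied_of_edge hq (Or.inl h1)
  · exact occupied_of_edge hq (Or.inr h2)

/-- if the pivot has no incident edge, every vertex connected to the pivot is the pivot -/
lemma reach_pivot_of_no_edge {P : PivotedGraph V SV SE}
    (hno : ∀ q ∈ P.edges, q.1 ≠ P.pivot ∧ q.2.1 ≠ P.pivot) {x : V}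
    (hx : Relation.ReflTransGen P.toLabeledGraph.Adj x P.pivot) : x = P.pivot := by
  induction hx using Relation.ReflTransGen.head_induction_on with
  | refl => rfl
  | head hxc _ ih =>
    subst ih
    obtain ⟨q, hq, hj⟩ := adjOn_iff.1 hxc
    rcases hj with ⟨_, h2⟩ | ⟨h1, _⟩
    · exact absurd h2 (hno q hq).2
    · exact absurd h1 (hno q hq).1

/-- Every vertex label is removable. -/
lemma label_removable (P : PivotedGraph V SV SE) (hconn : P.Connected)
    (hL : P.labels.Finite) (hsize : 2 ≤ P.toLabeledGraph.size)
    {p : V × SV} (hp : p ∈ P.labels) : P.ConnectedAfterRemove (Sum.inl p) := by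
  constructor
  · refine ⟨P.pivot_mem, ?_⟩
    by_cases hocc : Occupied P.labels P.edges P.pivot
    · left
      by_cases hedge : ∃ q ∈ P.edges, q.1 = P.pivot ∨ q.2.1 = P.pivot
      · obtain ⟨q, hq, hx⟩ := hedge
        exact occupied_of_edge hq hx
      · by_cases hlab : ∃ l, (P.pivot, l) ∈ P.labels ∧ (P.pivot, l) ≠ p
        · obtain ⟨l, hl, hlp⟩ := hlab
          exact Or.inl ⟨l, hl, hlp⟩
        · -- degenerate: pivot's only element is the label p itself
          exfalso
          push_neg at hedge hlab
          have hno : ∀ q ∈ P.edges, q.1 ≠ P.pivot ∧ q.2.1 ≠ P.pivot := by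
            intro q hq
            have := hedge q hq
            exact this
          have hverts : ∀ x ∈ P.verts, x = P.pivot := fun x hx =>
            reach_pivot_of_no_edge hno (hconn x hx)
          have hE0 : P.edges = ∅ := by
            ext q
            simp only [Set.mem_empty_iff_false, iff_false]
            intro hq
            have h1 := hverts q.1 (P.edges_sub hq).1
            have h2 := hverts q.2.1 (P.edges_sub hq).2
            exact P.no_loops hq (h1.trans h2.symm)
          have hsz : 2 ≤ P.labels.ncard := by
            have : P.edges.ncard = 0 := by rw [hE0]; simp
            unfold LabeledGraph.size at hsize
            omega
          obtain ⟨p', hp', hpp'⟩ := Set.exists_ne_of_one_lt_ncard (s := P.labels) (by omega) p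
          have : p'.1 = P.pivot := hverts p'.1 (P.labels_sub hp')
          have hform : p' = (P.pivot, p'.2) := by rw [← this]
          exact hpp' (hform.trans (hlab p'.2 (hform ▸ hp')))
    · exact Or.inr hocc
  · intro x hx
    exact hconn x hx.1

/-- An edge whose endpoints are joined by a detour avoiding it is removable. -/
lemma detour_removable (P : PivotedGraph V SV SE) (hconn : P.Connected)
    {q : V × V × SE} (hq : q ∈ P.edges)
    (hd : Relation.ReflTransGen (adjOn (P.edges \ {q})) q.1 q.2.1) :
    P.ConnectedAfterRemove (Sum.inr q) := by
  have hne : q.1 ≠ q.2.1 := P.no_loops hq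
  have hne' : ∀ z ∈ ({q.1, q.2.1} : Set V),
      Occupied P.labels (P.edges \ {q}) z := by
    intro z hz
    rcases hz with rfl | hz
    · rcases hd.cases_head with h | ⟨c, hc, _⟩
      · exact absurd h hne
      · exact occupied_of_adjOn hc
    · simp only [Set.mem_singleton_iff] at hz
      subst hz
      rcases (rtg_adjOn_symm hd).cases_head with h | ⟨c, hc, _⟩
      · exact absurd h.symm hne
      · exact occupied_of_adjOn hc
  constructor
  · refine ⟨P.pivot_mem, ?_⟩
    by_cases hp : P.pivot ∈ ({q.1, q.2.1} : Set V)
    · exact Or.inl (hne' _ hp)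
    · by_cases hocc : Occupied P.labels P.edges P.pivot
      · left
        rcases hocc with ⟨l, hl⟩ | ⟨u, l, hul⟩
        · exact Or.inl ⟨l, hl⟩
        · simp only [Set.mem_insert_iff, Set.mem_singleton_iff] at hp
          push_neg at hp
          rcases hul with h | h
          · refine Or.inr ⟨u, l, Or.inl ⟨h, ?_⟩⟩
            rintro rfl
            exact hp.1 rfl
          · refine Or.inr ⟨u, l, Or.inr ⟨h, ?_⟩⟩
            rintro rfl
            exact hp.2 rfl
      · exact Or.inr hocc
  · intro x hx
    exact rtg_del hd (hconn x hx.1)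

/-- No edge of a non-decomposable pattern admits a detour. -/
lemma bridges (P : PivotedGraph V SV SE) (hconn : P.Connected)
    (hnd : ¬ P.Decomposable) :
    ∀ q ∈ P.edges, ¬ Relation.ReflTransGen (adjOn (P.edges \ {q})) q.1 q.2.1 := by
  intro q hq hd
  obtain ⟨e, he, heq, hde⟩ := exists_second_nonbridge P.no_loops hq hd
  exact heq (Sum.inr.inj (eq_of_two_removable hnd (e₁ := Sum.inr e) (e₂ := Sum.inr q) he hq
    (detour_removable P hconn he hde) (detour_removable P hconn hq hd)))

end Level2

section Level3
open Relation List LabeledGraph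

variable {V SV SE : Type*}

/-- A pendant edge at an unlabeled non-pivot vertex is removable (provided the pivot
survives). -/
lemma pendant_removable (P : PivotedGraph V SV SE) (hconn : P.Connected)
    {e : V × V × SE} (he : e ∈ P.edges) {w prev : V}
    (hwp : Joins e prev w)
    (hw : ∀ f ∈ P.edges, (f.1 = w ∨ f.2.1 = w) → f = e)
    (hwlab : ∀ l, (w, l) ∉ P.labels) (hwpiv : w ≠ P.pivot)
    (hpivstay : Occupied P.labels (P.edges \ {e}) P.pivot ∨
      ¬ Occupied P.labels P.edges P.pivot) :
    P.ConnectedAfterRemove (Sum.inr e) := by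
  classical
  have hprevw : prev ≠ w := by
    rcases hwp with ⟨h1, h2⟩ | ⟨h1, h2⟩
    · rw [← h1, ← h2]; exact P.no_loops he
    · rw [← h1, ← h2]; exact (P.no_loops he).symm
  -- only neighbour of w is prev
  have hkey : ∀ a, adjOn P.edges a w → a = prev := by
    intro a ha
    obtain ⟨f, hf, hj⟩ := adjOn_iff.1 ha
    have hfe : f = e := by
      apply hw f hf
      rcases hj with ⟨_, h2⟩ | ⟨h1, _⟩
      · exact Or.inr h2
      · exact Or.inl h1
    subst hfe
    rcases hj with ⟨h1, h2⟩ | ⟨h1, h2⟩ <;> rcases hwp with ⟨g1, g2⟩ | ⟨g1, g2⟩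
    · exact h1.symm.trans g1
    · exact absurd (g2.symm.trans h2) hprevw
    · exact absurd (g1.symm.trans h1) hprevw
    · exact h2.symm.trans g2
  have hadj' : ∀ a b, adjOn P.edges a b → a ≠ w → b ≠ w → adjOn (P.edges \ {e}) a b := by
    intro a b hab ha hb
    obtain ⟨f, hf, hj⟩ := adjOn_iff.1 hab
    refine adjOn_of_joins (q := f) ⟨hf, ?_⟩ hj
    rintro rfl
    rcases hj with ⟨h1, h2⟩ | ⟨h1, h2⟩ <;> rcases hwp with ⟨g1, g2⟩ | ⟨g1, g2⟩
    · exact hb (h2.symm.trans g2)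
    · exact ha (h1.symm.trans g1)
    · exact ha (h2.symm.trans g2)
    · exact hb (h1.symm.trans g1)
  constructor
  · exact ⟨P.pivot_mem, hpivstay⟩
  · intro x hx
    have hxw : x ≠ w := by
      rintro rfl
      rcases hx.2 with hocc | hnocc
      · rcases hocc with ⟨l, hl⟩ | ⟨u, l, hul⟩
        · exact hwlab l hl
        · rcases hul with h | h
          · exact h.2 (hw _ h.1 (Or.inl rfl))
          · exact h.2 (hw _ h.1 (Or.inr rfl))
      · refine hnocc (occupied_of_edge he ?_)
        rcases hwp with ⟨_, h2⟩ | ⟨h1, _⟩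
        · exact Or.inr h2
        · exact Or.inl h1
    -- shortcut induction
    have hmain : ∀ y, Relation.ReflTransGen P.toLabeledGraph.Adj y P.pivot →
        Relation.ReflTransGen (adjOn (P.edges \ {e}))
          (if y = w then prev else y) P.pivot := by
      intro y hy
      induction hy using Relation.ReflTransGen.head_induction_on with
      | refl =>
        rw [if_neg (Ne.symm hwpiv)]
      | @head y c hyc hcp ih =>
        by_cases hyw : y = w
        · subst hyw
          rw [if_pos rfl]
          have hc : c = prev := hkey c (adjOn_symm hyc)
          rwa [if_neg (hc ▸ hprevw), hc] at ih
        · rw [if_neg hyw]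
          by_cases hcw : c = w
          · subst hcw
            have : y = prev := hkey y hyc
            rw [if_pos rfl] at ih
            exact this ▸ ih
          · rw [if_neg hcw] at ih
            exact (Relation.ReflTransGen.single (hadj' y c hyc hyw hcw)).trans ih
    have := hmain x (hconn x hx.1)
    rwa [if_neg hxw] at this

/-- the vertex set of a connected pattern with finite labels and edges is finite -/
lemma verts_finite (P : PivotedGraph V SV SE) (hconn : P.Connected)
    (hL : P.labels.Finite) (hE : P.edges.Finite) : P.verts.Finite := by
  have hsub : P.verts ⊆ {P.pivot} ∪ (fun q : V × V × SE => q.1) '' P.edges ∪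
      (fun q : V × V × SE => q.2.1) '' P.edges := by
    intro x hx
    rcases (hconn x hx).cases_head with h | ⟨c, hc, _⟩
    · exact Or.inl (Or.inl h)
    · obtain ⟨q, hq, hj⟩ := adjOn_iff.1 hc
      rcases hj with ⟨h1, _⟩ | ⟨_, h2⟩
      · exact Or.inl (Or.inr ⟨q, hq, h1⟩)
      · exact Or.inr ⟨q, hq, h2⟩
  exact Set.Finite.subset (((Set.finite_singleton _).union (hE.image _)).union (hE.image _)) hsub

/-- a simple path in `P` starting at the pivot -/
def GoodPath (P : PivotedGraph V SV SE) (l : List V) : Prop :=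
  l.Nodup ∧ l.head? = some P.pivot ∧ l.Chain' P.toLabeledGraph.Adj ∧ ∀ x ∈ l, x ∈ P.verts

lemma goodPath_ne_nil {P : PivotedGraph V SV SE} {l : List V} (h : GoodPath P l) : l ≠ [] := by
  intro hl
  have h2 := h.2.1
  rw [hl] at h2
  simp at h2

/-- every good path extends to a non-extendable good path -/
lemma extend_max (P : PivotedGraph V SV SE) (hfin : P.verts.Finite)
    {l₀ : List V} (h₀ : GoodPath P l₀) :
    ∃ l, GoodPath P l ∧ l₀ <+: l ∧
      ∀ z w, l.getLast? = some w → P.toLabeledGraph.Adj w z → z ∈ l := by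
  classical
  have hbdd : ∀ l, GoodPath P l → l.length ≤ hfin.toFinset.card := by
    intro l hl
    have h1 : l.toFinset ⊆ hfin.toFinset := by
      intro x hx
      simp only [List.mem_toFinset] at hx
      simp only [Set.Finite.mem_toFinset]
      exact hl.2.2.2 x hx
    calc l.length = l.toFinset.card := (List.toFinset_card_of_nodup hl.1).symm
    _ ≤ _ := Finset.card_le_card h1
  set S : Set ℕ := {n | ∃ l, GoodPath P l ∧ l₀ <+: l ∧ l.length = n} with hS
  have hSne : S.Nonempty := ⟨l₀.length, l₀, h₀, List.prefix_refl _, rfl⟩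
  have hSbdd : BddAbove S := by
    refine ⟨hfin.toFinset.card, ?_⟩
    rintro n ⟨l, hl, _, rfl⟩
    exact hbdd l hl
  obtain ⟨l, hl, hpre, hlen⟩ := Nat.sSup_mem hSne hSbdd
  refine ⟨l, hl, hpre, ?_⟩
  intro z w hlast hadj
  by_contra hz
  have hne : l ≠ [] := goodPath_ne_nil hl
  have hwl : l.getLast hne = w := by
    rwa [List.getLast?_eq_getLast hne, Option.some_inj] at hlast
  have hgood' : GoodPath P (l ++ [z]) := by
    refine ⟨?_, ?_, ?_, ?_⟩
    · rw [List.nodup_append]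
      exact ⟨hl.1, List.nodup_singleton _, by simp; exact fun a ha h => hz (h ▸ ha)⟩
    · rw [List.head?_append_of_ne_nil _ hne]
      exact hl.2.1
    · unfold List.Chain'
      rw [List.isChain_append]
      refine ⟨hl.2.2.1, List.isChain_singleton _, ?_⟩
      intro x hx y hy
      rw [List.getLast?_eq_getLast hne, Option.mem_def, Option.some_inj] at hx
      rw [List.head?_cons, Option.mem_def, Option.some_inj] at hy
      rw [← hx, ← hy, hwl]
      exact hadj
    · intro x hx
      rcases List.mem_append.1 hx with h | h
      · exact hl.2.2.2 x h
      · simp only [List.mem_singleton] at h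
        subst h
        obtain ⟨q, hq, hj⟩ := adjOn_iff.1 hadj
        rcases hj with ⟨_, h2⟩ | ⟨h1, _⟩
        · exact h2 ▸ (P.edges_sub hq).2
        · exact h1 ▸ (P.edges_sub hq).1
  have : (l ++ [z]).length ∈ S := ⟨l ++ [z], hgood', hpre.trans ⟨[z], rfl⟩, rfl⟩
  have hle := le_csSup hSbdd this
  rw [← hlen] at hle
  simp only [List.length_append, List.length_singleton] at hle
  omega

/-- in a connected pattern with an edge, the pivot is incident to an edge -/
lemma pivot_has_edge (P : PivotedGraph V SV SE) (hconn : P.Connected)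
    (hEne : P.edges.Nonempty) : ∃ f ∈ P.edges, f.1 = P.pivot ∨ f.2.1 = P.pivot := by
  by_contra h
  push_neg at h
  have hno : ∀ q ∈ P.edges, q.1 ≠ P.pivot ∧ q.2.1 ≠ P.pivot := by
    intro q hq
    have := h q hq
    tauto
  obtain ⟨q, hq⟩ := hEne
  have h1 := reach_pivot_of_no_edge hno (hconn q.1 (P.edges_sub hq).1)
  exact (hno q hq).1 h1

end Level3

section Level4
open Relation List LabeledGraph

variable {V SV SE : Type*}

lemma nodup_idx {l : List V} (h : l.Nodup) {i j : ℕ} (hi : i < l.length)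
    (hj : j < l.length) (he : l[i]'hi = l[j]'hj) : i = j :=
  (List.Nodup.getElem_inj_iff h).1 he

lemma getElem_idx_eq (l : List V) {i j : ℕ} (h : i = j) (hi : i < l.length) :
    l[i]'hi = l[j]'(h ▸ hi) := by subst h; rfl

lemma joins_right_unique {f : V × V × SE} {a b w : V}
    (h1 : Joins f a w) (h2 : Joins f b w) (ha : a ≠ w) : a = b := by
  rcases h1 with ⟨x1, x2⟩ | ⟨x1, x2⟩ <;> rcases h2 with ⟨y1, y2⟩ | ⟨y1, y2⟩
  · exact x1.symm.trans y1
  · exact absurd (x1.symm.trans y1) ha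
  · exact absurd (x2.symm.trans y2) ha
  · exact x2.symm.trans y2

lemma joins_endpoint_or {f : V × V × SE} {a w : V} (h : Joins f a w) :
    f.1 = w ∨ f.2.1 = w := by
  rcases h with ⟨_, h2⟩ | ⟨h1, _⟩
  · exact Or.inr h2
  · exact Or.inl h1

lemma joins_endpoint_cases {f : V × V × SE} {a x u v : V}
    (h : Joins f a x) (h2 : Joins f u v) : a = u ∨ a = v := by
  rcases h with ⟨h1, _⟩ | ⟨_, hb⟩ <;> rcases h2 with ⟨g1, g2⟩ | ⟨g1, g2⟩
  · exact Or.inl (h1.symm.trans g1)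
  · exact Or.inr (h1.symm.trans g1)
  · exact Or.inr (hb.symm.trans g2)
  · exact Or.inl (hb.symm.trans g2)

/-- the end of a non-extendable good path of length ≥ 2 carries a removable element -/
lemma end_removable (P : PivotedGraph V SV SE) (hconn : P.Connected)
    (hL : P.labels.Finite) (hE : P.edges.Finite) (hsize : 2 ≤ P.toLabeledGraph.size)
    (hbr : ∀ q ∈ P.edges, ¬ Relation.ReflTransGen (adjOn (P.edges \ {q})) q.1 q.2.1)
    {vs : List V} (hgood : GoodPath P vs) (hlen : 2 ≤ vs.length)
    (hnext : ∀ z w, vs.getLast? = some w → P.toLabeledGraph.Adj w z → z ∈ vs) :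
    ∃ r, P.ConnectedAfterRemove r ∧ P.toLabeledGraph.HasElement r ∧
      ((∃ l, r = Sum.inl ((vs.getLast (goodPath_ne_nil hgood)), l) ∧
          ((vs.getLast (goodPath_ne_nil hgood)), l) ∈ P.labels) ∨
       (∃ e, r = Sum.inr e ∧ e ∈ P.edges ∧
          (e.1 = vs.getLast (goodPath_ne_nil hgood) ∨
            e.2.1 = vs.getLast (goodPath_ne_nil hgood)) ∧
          (∀ f ∈ P.edges, (f.1 = vs.getLast (goodPath_ne_nil hgood) ∨
            f.2.1 = vs.getLast (goodPath_ne_nil hgood)) → f = e) ∧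
          e.1 ∈ vs ∧ e.2.1 ∈ vs)) := by
  classical
  obtain ⟨hnd, hhead, hch, hmem⟩ := hgood
  have hne : vs ≠ [] := by
    intro h; rw [h] at hlen; simp at hlen
  set n := vs.length with hn
  have h2n : 2 ≤ n := hlen
  have hn1 : n - 1 < n := by omega
  have hn2 : n - 2 < n := by omega
  have hwdef : vs.getLast hne = vs[n-1]'hn1 := List.getLast_eq_getElem _
  set w : V := vs[n-1]'hn1 with hwdef2
  set prev : V := vs[n-2]'hn2 with hprevdef
  have hlastw : vs.getLast? = some w := by
    rw [List.getLast?_eq_getLast hne, hwdef]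
  -- the last chain step
  have hAdjPrev : adjOn P.edges prev w := by
    have h := List.isChain_iff_getElem.1 hch (n-2) (by omega)
    have : vs[n-2+1]'(by omega) = vs[n-1]'hn1 := getElem_idx_eq vs (by omega) _
    rw [this] at h
    exact h
  have hprevw : prev ≠ w := by
    intro h
    have := nodup_idx hnd hn2 hn1 h
    omega
  -- every edge incident to w joins prev and w
  have hjoins_at_w : ∀ f ∈ P.edges, (f.1 = w ∨ f.2.1 = w) → Joins f prev w := by
    intro f hf hfw
    have hyj : ∃ y, Joins f y w := by
      rcases hfw with h | h
      · exact ⟨f.2.1, Or.inr ⟨h, rfl⟩⟩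
      · exact ⟨f.1, Or.inl ⟨rfl, h⟩⟩
    obtain ⟨y, hjy⟩ := hyj
    have hyw : y ≠ w := by
      rcases hjy with ⟨h1, h2⟩ | ⟨h1, h2⟩
      · rw [← h1, ← h2]; exact P.no_loops hf
      · rw [← h2, ← h1]; exact (P.no_loops hf).symm
    have hyvs : y ∈ vs :=
      hnext y w hlastw (adjOn_of_joins hf (joins_symm hjy))
    obtain ⟨j, hjlt, hjy'⟩ := List.mem_iff_getElem.1 hyvs
    have hjne : j ≠ n - 1 := by
      intro h
      exact hyw (by rw [← hjy']; exact getElem_idx_eq vs h _)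
    by_cases hjp : j = n - 2
    · have : y = prev := by rw [← hjy']; exact getElem_idx_eq vs hjp _
      exact this ▸ hjy
    · exfalso
      have hjle : j ≤ n - 2 := by omega
      have hseg := seg_rtg (S := ({w} : Set V)) (f := f) hch
        (by rcases hfw with h | h
            · exact Or.inl (by simp [h])
            · exact Or.inr (by simp [h]))
        hjle hn2
        (fun m hm h1 h2 => by
          simp only [Set.mem_singleton_iff]
          intro hEq
          have := nodup_idx hnd hm hn1 hEq
          omega)
      rw [hjy'] at hseg
      -- last step prev → w avoiding f
      obtain ⟨g, hg, hjg⟩ := adjOn_iff.1 hAdjPrev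
      have hgf : g ≠ f := by
        intro h
        subst h
        have := joins_right_unique (joins_symm (joins_symm hjg)) hjy hprevw
        -- hjg : Joins g prev w ; hjy : Joins g y w → prev = y
        exact hjp (nodup_idx hnd hn2 hjlt (by rw [hjy']; exact this.symm ▸ rfl)).symm
      have hstep : adjOn (P.edges \ {f}) prev w := adjOn_of_joins ⟨hg, hgf⟩ hjg
      have htot : Relation.ReflTransGen (adjOn (P.edges \ {f})) y w := hseg.tail hstep
      refine hbr f hf ?_
      rcases hjy with ⟨h1, h2⟩ | ⟨h1, h2⟩
      · rw [h1, h2]; exact htot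
      · rw [h1, h2]; exact rtg_adjOn_symm htot
  -- choose the edge joining prev and w
  obtain ⟨e, he, hje⟩ := adjOn_iff.1 hAdjPrev
  -- it is the unique edge at w
  have huniqw : ∀ f ∈ P.edges, (f.1 = w ∨ f.2.1 = w) → f = e := by
    intro f hf hfw
    by_contra hfe
    have hjf := hjoins_at_w f hf hfw
    have hstep : adjOn (P.edges \ {f}) prev w :=
      adjOn_of_joins ⟨he, fun h => hfe (by simpa using h.symm)⟩ hje
    refine hbr f hf ?_
    rcases hjf with ⟨h1, h2⟩ | ⟨h1, h2⟩
    · rw [h1, h2]; exact Relation.ReflTransGen.single hstep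
    · rw [h1, h2]; exact Relation.ReflTransGen.single (adjOn_symm hstep)
  rw [← hwdef] at *
  by_cases hcase : ∃ l, (vs.getLast hne, l) ∈ P.labels
  · obtain ⟨l, hl⟩ := hcase
    exact ⟨Sum.inl (vs.getLast hne, l), label_removable P hconn hL hsize hl, hl,
      Or.inl ⟨l, rfl, hl⟩⟩
  · push_neg at hcase
    have hwpiv : vs.getLast hne ≠ P.pivot := by
      have h0 : vs[0]'(by omega) = P.pivot := by
        have := List.head?_eq_getElem? (l := vs)
        rw [hhead, List.getElem?_eq_getElem (by omega : 0 < vs.length)] at this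
        exact (Option.some_inj.1 this).symm
      intro h
      have := nodup_idx hnd hn1 (by omega : 0 < vs.length) (by rw [← hwdef2, h, h0])
      omega
    -- pivot survival
    have hstay : Occupied P.labels (P.edges \ {e}) P.pivot ∨
        ¬ Occupied P.labels P.edges P.pivot := by
      by_cases hocc : Occupied P.labels P.edges P.pivot
      · left
        by_cases hlabp : ∃ l, (P.pivot, l) ∈ P.labels
        · exact Or.inl hlabp
        · by_cases hedgep : ∃ f ∈ P.edges, f ≠ e ∧ (f.1 = P.pivot ∨ f.2.1 = P.pivot)
          · obtain ⟨f, hf, hfe, hfp⟩ := hedgep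
            exact occupied_of_edge (⟨hf, hfe⟩ : f ∈ P.edges \ {e}) hfp
          · exfalso
            push_neg at hlabp hedgep
            -- every edge at the pivot is e
            have hedgep' : ∀ f ∈ P.edges, (f.1 = P.pivot ∨ f.2.1 = P.pivot) → f = e := by
              intro f hf hfp
              by_contra hfe
              rcases hedgep f hf hfe with ⟨h1, h2⟩
              rcases hfp with h | h
              · exact h1 h
              · exact h2 h
            -- the pivot is an endpoint of e, hence equals prev
            have hpivprev : P.pivot = prev := by
              rcases hocc with ⟨l, hl⟩ | ⟨u, l, hul⟩
              · exact absurd hl (hlabp l)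
              · have hfp : ∃ f ∈ P.edges, Joins f P.pivot u := by
                  rcases hul with h | h
                  · exact ⟨(P.pivot, u, l), h, Or.inl ⟨rfl, rfl⟩⟩
                  · exact ⟨(u, P.pivot, l), h, Or.inr ⟨rfl, rfl⟩⟩
                obtain ⟨f, hf, hjf⟩ := hfp
                have hfe : f = e := hedgep' f hf (by
                  rcases hjf with ⟨h1, _⟩ | ⟨_, h2⟩
                  · exact Or.inl h1
                  · exact Or.inr h2)
                subst hfe
                rcases joins_endpoint_cases hjf hje with h | h
                · exact h
                · exact absurd h.symm hwpiv
            -- reachable vertices lie in {pivot, last}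
            have hclosed : ∀ x, Relation.ReflTransGen P.toLabeledGraph.Adj x P.pivot →
                x = P.pivot ∨ x = vs.getLast hne := by
              intro x hx
              induction hx using Relation.ReflTransGen.head_induction_on with
              | refl => exact Or.inl rfl
              | @head a c hac hcp ih =>
                obtain ⟨g, hg, hjg⟩ := adjOn_iff.1 hac
                have hge : g = e := by
                  rcases ih with hc | hc
                  · exact hedgep' g hg (hc ▸ joins_endpoint_or hjg)
                  · exact huniqw g hg (hc ▸ joins_endpoint_or hjg)
                subst hge
                rcases joins_endpoint_cases hjg hje with h | h
                · exact Or.inl (h.trans hpivprev.symm)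
                · exact Or.inr h
            have hverts2 : ∀ x ∈ P.verts, x = P.pivot ∨ x = vs.getLast hne :=
              fun x hx => hclosed x (hconn x hx)
            have hE1 : ∀ g ∈ P.edges, g = e := by
              intro g hg
              have h1 := hverts2 g.1 (P.edges_sub hg).1
              have h2 := hverts2 g.2.1 (P.edges_sub hg).2
              rcases h1 with h1 | h1 <;> rcases h2 with h2 | h2
              · exact absurd (h1.trans h2.symm) (P.no_loops hg)
              · exact huniqw g hg (Or.inr h2)
              · exact huniqw g hg (Or.inl h1)
              · exact absurd (h1.trans h2.symm) (P.no_loops hg)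
            have hEcard : P.edges.ncard ≤ 1 := by
              have hsub : P.edges ⊆ {e} := fun g hg => hE1 g hg
              simpa using Set.ncard_le_ncard hsub (Set.finite_singleton e)
            have hL1 : 1 ≤ P.labels.ncard := by
              unfold LabeledGraph.size at hsize
              omega
            obtain ⟨p, hp⟩ := Set.nonempty_of_ncard_ne_zero (s := P.labels) (by omega)
            rcases hverts2 p.1 (P.labels_sub hp) with h | h
            · exact hlabp p.2 (by rw [← h]; exact hp)
            · exact hcase p.2 (by rw [← h]; exact hp)
      · exact Or.inr hocc
    refine ⟨Sum.inr e, pendant_removable P hconn he hje huniqw hcase hwpiv hstay, he,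
      Or.inr ⟨e, rfl, he, joins_endpoint_or hje, huniqw, ?_, ?_⟩⟩
    · rcases hje with ⟨h1, _⟩ | ⟨h1, _⟩
      · rw [h1, hprevdef]; exact List.getElem_mem _
      · rw [h1]; exact List.getLast_mem hne
    · rcases hje with ⟨_, h2⟩ | ⟨_, h2⟩
      · rw [h2]; exact List.getLast_mem hne
      · rw [h2, hprevdef]; exact List.getElem_mem _

end Level4

section Level5
open Relation List LabeledGraph

variable {V SV SE : Type*}

theorem forward_dir (P : PivotedGraph V SV SE) (hconn : P.Connected)
    (hL : P.labels.Finite) (hE : P.edges.Finite) (hsize : 2 ≤ P.toLabeledGraph.size)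
    (hnd : ¬ P.Decomposable) : P.IsPathPattern := by
  classical
  have hbr := bridges P hconn hnd
  have hsub : P.labels.Subsingleton := by
    intro p1 h1 p2 h2
    exact Sum.inl.inj (eq_of_two_removable hnd (e₁ := Sum.inl p1) (e₂ := Sum.inl p2) h1 h2
      (label_removable P hconn hL hsize h1) (label_removable P hconn hL hsize h2))
  have hEne : P.edges.Nonempty := by
    by_contra h
    rw [Set.not_nonempty_iff_eq_empty] at h
    have h0 : P.edges.ncard = 0 := by rw [h]; simp
    have h2 : 2 ≤ P.labels.ncard := by unfold LabeledGraph.size at hsize; omega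
    obtain ⟨a, ha, b, hb, hab⟩ := (Set.one_lt_ncard hL).1 (by omega)
    exact hab (hsub ha hb)
  have hfin := verts_finite P hconn hL hE
  have hgood0 : GoodPath P [P.pivot] :=
    ⟨List.nodup_singleton _, rfl, List.isChain_singleton _, by simpa using P.pivot_mem⟩
  obtain ⟨vs, hgood, hpre0, hnext⟩ := extend_max P hfin hgood0
  have hne : vs ≠ [] := goodPath_ne_nil hgood
  have hndup := hgood.1
  have hhead := hgood.2.1
  have hch := hgood.2.2.1
  have hmem := hgood.2.2.2
  have hnposlen : 0 < vs.length := List.length_pos_iff.2 hne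
  have h0piv : vs[0]'hnposlen = P.pivot := by
    have := List.head?_eq_getElem? (l := vs)
    rw [hhead, List.getElem?_eq_getElem hnposlen] at this
    exact (Option.some_inj.1 this).symm
  have hlen2 : 2 ≤ vs.length := by
    rcases Nat.lt_or_ge vs.length 2 with hlt | hge
    · exfalso
      have hl1 : vs.length = 1 := by omega
      obtain ⟨a, hva⟩ := List.length_eq_one_iff.1 hl1
      have hapiv : a = P.pivot := by
        rw [hva] at hhead
        simpa using hhead
      subst hapiv
      obtain ⟨f, hf, hfp⟩ := pivot_has_edge P hconn hEne
      have hadjp : ∃ y, P.toLabeledGraph.Adj P.pivot y ∧ y ≠ P.pivot := by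
        rcases hfp with h' | h'
        · exact ⟨f.2.1, adjOn_of_joins hf (Or.inl ⟨h', rfl⟩),
            fun hy => P.no_loops hf (h'.trans hy.symm)⟩
        · exact ⟨f.1, adjOn_of_joins hf (Or.inr ⟨rfl, h'⟩),
            fun hy => P.no_loops hf (hy.trans h'.symm)⟩
      obtain ⟨y, hy, hynp⟩ := hadjp
      have hlast1 : vs.getLast? = some P.pivot := by rw [hva]; rfl
      have := hnext y P.pivot hlast1 hy
      rw [hva] at this
      simp only [List.mem_singleton] at this
      exact hynp this
    · exact hge
  obtain ⟨r₁, hrem1, hhas1, hloc1⟩ :=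
    end_removable P hconn hL hE hsize hbr hgood hlen2 hnext
  -- closure of vs under adjacency
  have hclose : ∀ y z, y ∈ vs → P.toLabeledGraph.Adj y z → z ∈ vs := by
    intro y z hyvs hadj
    by_contra hz
    obtain ⟨i, hilt, hiy⟩ := List.mem_iff_getElem.1 hyvs
    obtain ⟨f, hf, hjf⟩ := adjOn_iff.1 hadj
    have hyz : y ≠ z := by
      rcases hjf with ⟨h1, h2⟩ | ⟨h1, h2⟩
      · rw [← h1, ← h2]; exact P.no_loops hf
      · rw [← h2, ← h1]; exact (P.no_loops hf).symm
    have hzvert : z ∈ P.verts := by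
      rcases hjf with ⟨_, h2⟩ | ⟨h1, _⟩
      · exact h2 ▸ (P.edges_sub hf).2
      · exact h1 ▸ (P.edges_sub hf).1
    have htlen : (vs.take (i+1)).length = i + 1 := by
      rw [List.length_take]; omega
    have hgoodpre : GoodPath P (vs.take (i+1) ++ [z]) := by
      refine ⟨?_, ?_, ?_, ?_⟩
      · rw [List.nodup_append]
        refine ⟨(List.take_sublist _ _).nodup hndup, List.nodup_singleton _, ?_⟩
        intro x hx
        simp only [List.mem_singleton]
        intro _ hb hxz
        subst hb hxz
        exact hz ((List.take_sublist _ _).mem hx)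
      · rw [List.head?_append_of_ne_nil _ (by
          intro hnil
          have := congrArg List.length hnil
          rw [htlen] at this
          simp at this)]
        rw [List.head?_eq_getElem?,
          List.getElem?_eq_getElem (show 0 < (vs.take (i+1)).length by rw [htlen]; omega)]
        have h00 : (vs.take (i+1))[0]'(by rw [htlen]; omega) = vs[0]'hnposlen := by simp
        rw [h00, h0piv]
      · unfold List.Chain'
        rw [List.isChain_append]
        refine ⟨List.IsChain.take hch _, List.isChain_singleton _, ?_⟩
        intro a ha b hb
        rw [List.getLast?_eq_getElem?, htlen] at ha
        simp only [Nat.add_sub_cancel] at ha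
        rw [List.getElem?_eq_getElem (show i < (vs.take (i+1)).length by rw [htlen]; omega)] at ha
        rw [List.head?_cons] at hb
        simp only [Option.mem_def, Option.some_inj] at ha hb
        have hax : (vs.take (i+1))[i]'(by rw [htlen]; omega) = vs[i]'hilt := by simp
        rw [← ha, ← hb, hax, hiy]
        exact hadj
      · intro x hx
        rcases List.mem_append.1 hx with h | h
        · exact hmem x ((List.take_sublist _ _).mem h)
        · simp only [List.mem_singleton] at h
          exact h ▸ hzvert
    obtain ⟨vs₂, hgood₂, hpre₂, hnext₂⟩ := extend_max P hfin hgoodpre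
    have hne₂ : vs₂ ≠ [] := goodPath_ne_nil hgood₂
    have hprelen : (vs.take (i+1) ++ [z]).length = i + 2 := by
      rw [List.length_append, htlen]; rfl
    have hlen₂ : 2 ≤ vs₂.length := by
      have := hpre₂.length_le
      omega
    obtain ⟨r₂, hrem2, hhas2, hloc2⟩ :=
      end_removable P hconn hL hE hsize hbr hgood₂ hlen₂ hnext₂
    have hr12 : r₁ = r₂ := eq_of_two_removable hnd hhas1 hhas2 hrem1 hrem2
    -- the end of vs₂ lies in vs
    have hw₂vs : vs₂.getLast hne₂ ∈ vs := by
      rcases hloc1 with ⟨l₁, hr1, hl1⟩ | ⟨e₁, hr1, he₁, hate₁, huq₁, hep1, hep2⟩ <;>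
        rcases hloc2 with ⟨l₂, hr2, hl2⟩ | ⟨e₂, hr2, he₂, hate₂, huq₂, hx1, hx2⟩
      · rw [hr1, hr2] at hr12
        have hww : vs.getLast (goodPath_ne_nil hgood) = vs₂.getLast (goodPath_ne_nil hgood₂) :=
          congrArg Prod.fst (Sum.inl.inj hr12)
        rw [← hww]
        exact List.getLast_mem _
      · rw [hr1, hr2] at hr12; exact absurd hr12 (by simp)
      · rw [hr1, hr2] at hr12; exact absurd hr12 (by simp)
      · rw [hr1, hr2] at hr12
        have hee : e₁ = e₂ := Sum.inr.inj hr12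
        subst hee
        rcases hate₂ with h | h
        · exact h ▸ hep1
        · exact h ▸ hep2
    obtain ⟨k, hklt, hkw⟩ := List.mem_iff_getElem.1 hw₂vs
    -- position bookkeeping inside vs₂
    have hpreget : ∀ j (hj : j < (vs.take (i+1) ++ [z]).length),
        vs₂[j]'(lt_of_lt_of_le hj hpre₂.length_le) = (vs.take (i+1) ++ [z])[j]'hj :=
      fun j hj => (hpre₂.getElem hj).symm
    have hilt₂ : i < vs₂.length := by
      have := hpre₂.length_le
      omega
    have hi1lt₂ : i + 1 < vs₂.length := by
      have := hpre₂.length_le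
      omega
    have hy₂ : vs₂[i]'hilt₂ = y := by
      rw [hpreget i (by omega)]
      rw [List.getElem_append_left (by omega)]
      rw [← hiy]
      simp
    have hz₂ : vs₂[i+1]'hi1lt₂ = z := by
      rw [hpreget (i+1) (by omega)]
      rw [List.getElem_append_right (by omega)]
      simp [htlen]
    -- f's endpoint y is in the avoided set for the vs₂-segment
    have hfS1 : f.1 ∈ ({y} : Set V) ∨ f.2.1 ∈ ({y} : Set V) := by
      rcases hjf with ⟨h1, _⟩ | ⟨_, h2⟩
      · exact Or.inl (by simp [h1])
      · exact Or.inr (by simp [h2])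
    have hfS2 : f.1 ∈ ({z} : Set V) ∨ f.2.1 ∈ ({z} : Set V) := by
      rcases hjf with ⟨_, h2⟩ | ⟨h1, _⟩
      · exact Or.inr (by simp [h2])
      · exact Or.inl (by simp [h1])
    have hlast₂lt : vs₂.length - 1 < vs₂.length := by omega
    have hseg1 := seg_rtg (S := ({y} : Set V)) (f := f) hgood₂.2.2.1 hfS1
      (show i + 1 ≤ vs₂.length - 1 by omega) hlast₂lt
      (fun m hm h1 h2 => by
        simp only [Set.mem_singleton_iff]
        intro hEq
        rw [← hy₂] at hEq
        have := nodup_idx hgood₂.1 hm hilt₂ hEq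
        omega)
    rw [hz₂] at hseg1
    have hglast₂ : vs₂[vs₂.length - 1]'hlast₂lt = vs₂.getLast hne₂ :=
      (List.getLast_eq_getElem _).symm
    rw [hglast₂] at hseg1
    -- segment of vs from vs[k] to vs[i] (or reverse)
    have havoidz : ∀ m (hm : m < vs.length), vs[m]'hm ∉ ({z} : Set V) := by
      intro m hm
      simp only [Set.mem_singleton_iff]
      intro hEq
      exact hz (hEq ▸ List.getElem_mem hm)
    have hseg2 : Relation.ReflTransGen (adjOn (P.edges \ {f})) (vs[k]'hklt) (vs[i]'hilt) := by
      rcases le_or_gt i k with hik | hki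
      · exact rtg_adjOn_symm (seg_rtg (S := ({z} : Set V)) (f := f) hch hfS2 hik hklt
          (fun m hm _ _ => havoidz m hm))
      · exact seg_rtg (S := ({z} : Set V)) (f := f) hch hfS2 (le_of_lt hki) hilt
          (fun m hm _ _ => havoidz m hm)
    rw [hkw, hiy] at hseg2
    have htot : Relation.ReflTransGen (adjOn (P.edges \ {f})) z y := hseg1.trans hseg2
    refine hbr f hf ?_
    rcases hjf with ⟨h1, h2⟩ | ⟨h1, h2⟩
    · rw [h1, h2]; exact rtg_adjOn_symm htot
    · rw [h1, h2]; exact htot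
  -- every vertex is on vs
  have hverts : ∀ x ∈ P.verts, x ∈ vs := by
    intro x hx
    have hr := rtg_adjOn_symm (hconn x hx)
    clear hx
    induction hr with
    | refl => exact h0piv ▸ List.getElem_mem hnposlen
    | tail hb hbc ih => exact hclose _ _ ih hbc
  -- every edge joins consecutive vertices of vs
  have hcons : ∀ q ∈ P.edges, ∃ m, ∃ (hm1 : m < vs.length), ∃ (hm2 : m + 1 < vs.length),
      Joins q (vs[m]'hm1) (vs[m+1]'hm2) := by
    intro q hq
    obtain ⟨i, hilt, hiq⟩ := List.mem_iff_getElem.1 (hverts q.1 (P.edges_sub hq).1)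
    obtain ⟨k, hklt, hkq⟩ := List.mem_iff_getElem.1 (hverts q.2.1 (P.edges_sub hq).2)
    have hik : i ≠ k := by
      intro h
      exact P.no_loops hq (by rw [← hiq, ← hkq, getElem_idx_eq vs h])
    -- if non-consecutive, contradiction with bridge property
    have hkey : ∀ a b (ha : a < vs.length) (hb : b < vs.length), a + 1 < b →
        Joins q (vs[a]'ha) (vs[b]'hb) → False := by
      intro a b ha hb hab hj
      have hS : q.1 ∈ ({vs[b]'hb} : Set V) ∨ q.2.1 ∈ ({vs[b]'hb} : Set V) := by
        rcases hj with ⟨_, h2⟩ | ⟨h1, _⟩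
        · exact Or.inr (by simp [h2])
        · exact Or.inl (by simp [h1])
      have hb1 : b - 1 < vs.length := by omega
      have hseg := seg_rtg (S := ({vs[b]'hb} : Set V)) (f := q) hch hS
        (show a ≤ b - 1 by omega) hb1
        (fun m hm h1 h2 => by
          simp only [Set.mem_singleton_iff]
          intro hEq
          have := nodup_idx hndup hm hb hEq
          omega)
      -- last step from vs[b-1] to vs[b]
      have hadjb : adjOn P.edges (vs[b-1]'hb1) (vs[b]'hb) := by
        have h := List.isChain_iff_getElem.1 hch (b-1) (by omega)
        have he : vs[b-1+1]'(by omega) = vs[b]'hb := getElem_idx_eq vs (by omega) _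
        rw [he] at h
        exact h
      obtain ⟨g, hg, hjg⟩ := adjOn_iff.1 hadjb
      have hgq : g ≠ q := by
        intro hEq
        subst hEq
        -- g joins vs[b-1], vs[b] and also vs[a], vs[b] with a < b-1
        have := joins_right_unique hjg (joins_symm (joins_symm hj)) ?hne1
        case hne1 =>
          intro hEq2
          have := nodup_idx hndup hb1 hb hEq2
          omega
        have := nodup_idx hndup hb1 ha this
        omega
      have hstep : adjOn (P.edges \ {q}) (vs[b-1]'hb1) (vs[b]'hb) :=
        adjOn_of_joins ⟨hg, hgq⟩ hjg
      have htot := hseg.tail hstep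
      refine hbr q hq ?_
      rcases hj with ⟨h1, h2⟩ | ⟨h1, h2⟩
      · rw [h1, h2]; exact htot
      · rw [h1, h2]; exact rtg_adjOn_symm htot
    have hjq : Joins q (vs[i]'hilt) (vs[k]'hklt) := Or.inl ⟨hiq.symm, hkq.symm⟩
    rcases Nat.lt_or_ge i k with hlt | hge
    · rcases Nat.lt_or_ge (i+1) k with hlt2 | hge2
      · exact absurd (hkey i k hilt hklt hlt2 hjq) (fun h => h)
      · have hk1 : k = i + 1 := by omega
        subst hk1
        exact ⟨i, hilt, hklt, hjq⟩
    · have hki : k < i := by omega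
      rcases Nat.lt_or_ge (k+1) i with hlt2 | hge2
      · exact absurd (hkey k i hklt hilt hlt2 (joins_symm hjq)) (fun h => h)
      · have hi1 : i = k + 1 := by omega
        subst hi1
        exact ⟨k, hklt, hilt, joins_symm hjq⟩
  -- no parallel edges
  have hpar : ∀ u w, ∀ g ∈ P.edges, ∀ g' ∈ P.edges, Joins g u w → Joins g' u w → g = g' := by
    intro u w g hg g' hg' hjg hjg'
    by_contra hne'
    refine hbr g hg ?_
    have hstep : adjOn (P.edges \ {g}) u w :=
      adjOn_of_joins ⟨hg', fun h => hne' (by simpa using h.symm)⟩ hjg'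
    rcases hjg with ⟨h1, h2⟩ | ⟨h1, h2⟩
    · rw [h1, h2]; exact Relation.ReflTransGen.single hstep
    · rw [h1, h2]; exact Relation.ReflTransGen.single (adjOn_symm hstep)
  -- assemble
  refine ⟨vs, hne, hndup, hhead, ?_, ?_, ?_, hsub, ?_⟩
  · ext x
    simp only [Set.mem_setOf_eq]
    exact ⟨fun hx => hverts x hx, fun hx => hmem x hx⟩
  · intro q hq
    obtain ⟨m, hm1, hm2, hj⟩ := hcons q hq
    exact ⟨m, vs[m]'hm1, vs[m+1]'hm2, List.getElem?_eq_getElem hm1,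
      List.getElem?_eq_getElem hm2, hj⟩
  · intro m u w hu hw
    have hm2 : m + 1 < vs.length := by
      by_contra h
      rw [List.getElem?_eq_none (by omega)] at hw
      exact absurd hw (by simp)
    have hm1 : m < vs.length := by omega
    rw [List.getElem?_eq_getElem hm1, Option.some_inj] at hu
    rw [List.getElem?_eq_getElem hm2, Option.some_inj] at hw
    subst hu hw
    have hadjm : adjOn P.edges (vs[m]'hm1) (vs[m+1]'hm2) := by
      have h := List.isChain_iff_getElem.1 hch m (by omega)
      exact h
    obtain ⟨g, hg, hjg⟩ := adjOn_iff.1 hadjm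
    refine ⟨g, ⟨hg, hjg⟩, ?_⟩
    rintro g' ⟨hg', hjg'⟩
    exact hpar _ _ g' hg' g hg hjg' hjg
  · intro p hp
    -- if there is a label, the removable end element is a label at the end of vs
    rcases hloc1 with ⟨l₁, hr1, hl1⟩ | ⟨e₁, hr1, he₁, hate₁, huq₁, hep1, hep2⟩
    · have := hsub hp hl1
      rw [List.getLast?_eq_getLast hne, this]
    · exfalso
      have := eq_of_two_removable hnd (e₁ := Sum.inl p) (e₂ := r₁) hp hhas1
        (label_removable P hconn hL hsize hp) hrem1
      rw [hr1] at this
      exact absurd this (by simp)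
end Level5

section Level6
open Relation List LabeledGraph

variable {V SV SE : Type*}

theorem backward_dir (P : PivotedGraph V SV SE) (hsize : 2 ≤ P.toLabeledGraph.size)
    (hp : P.IsPathPattern) : ¬ P.Decomposable := by
  classical
  obtain ⟨vs, hne, hndup, hhead, hverts, hedge, huniq, hsub, hlast⟩ := hp
  rintro ⟨e₁, e₂, hne12, h1, h2, hrem1, hrem2⟩
  have hnpos : 0 < vs.length := List.length_pos_iff.2 hne
  have h0piv : vs[0]'hnpos = P.pivot := by
    have := List.head?_eq_getElem? (l := vs)
    rw [hhead, List.getElem?_eq_getElem hnpos] at this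
    exact (Option.some_inj.1 this).symm
  -- reachability bound after removing a consecutive edge
  have hreach : ∀ q ∈ P.edges, ∀ i (hi : i < vs.length) (hi1 : i + 1 < vs.length),
      Joins q (vs[i]'hi) (vs[i+1]'hi1) →
      ∀ x, Relation.ReflTransGen (adjOn (P.edges \ {q})) P.pivot x →
      ∃ j, ∃ (hj : j < vs.length), j ≤ i ∧ vs[j]'hj = x := by
    intro q hq i hi hi1 hjq x hx
    induction hx with
    | refl => exact ⟨0, hnpos, by omega, h0piv⟩
    | tail hab hbc ih =>
      rename_i b c
      obtain ⟨j, hj, hjle, hjb⟩ := ih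
      obtain ⟨g, hg, hjg⟩ := adjOn_iff.1 hbc
      obtain ⟨m, u, w', hmu, hmw, hjg2⟩ := hedge g hg.1
      obtain ⟨hm1, hmu'⟩ := List.getElem?_eq_some_iff.1 hmu
      obtain ⟨hm2, hmw'⟩ := List.getElem?_eq_some_iff.1 hmw
      subst hmu' hmw'
      have hbc' : (b = vs[m]'hm1 ∧ c = vs[m+1]'hm2) ∨
          (b = vs[m+1]'hm2 ∧ c = vs[m]'hm1) := by
        rcases hjg with ⟨x1, x2⟩ | ⟨x1, x2⟩ <;> rcases hjg2 with ⟨y1, y2⟩ | ⟨y1, y2⟩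
        · exact Or.inl ⟨x1.symm.trans y1, x2.symm.trans y2⟩
        · exact Or.inr ⟨x1.symm.trans y1, x2.symm.trans y2⟩
        · exact Or.inr ⟨x2.symm.trans y2, x1.symm.trans y1⟩
        · exact Or.inl ⟨x2.symm.trans y2, x1.symm.trans y1⟩
      rcases hbc' with ⟨hb, hc⟩ | ⟨hb, hc⟩
      · -- b at position m, c at position m+1
        have hjm : j = m := nodup_idx hndup hj hm1 (hjb.trans hb)
        subst hjm
        have hji : j < i := by
          rcases Nat.lt_or_ge j i with h | h
          · exact h
          · exfalso
            have hji' : j = i := by omega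
            subst hji'
            -- g joins vs[j], vs[j+1]; so does q : uniqueness forces g = q
            obtain ⟨q', hq', huq'⟩ := huniq j (vs[j]'hj) (vs[j+1]'hm2)
              (List.getElem?_eq_getElem hj) (List.getElem?_eq_getElem hm2)
            have hgq' : g = q' := huq' g ⟨hg.1, hjg2⟩
            have hqq' : q = q' := huq' q ⟨hq, hjq⟩
            exact hg.2 (hgq'.trans hqq'.symm)
        exact ⟨j + 1, hm2, by omega, hc.symm⟩
      · -- b at position m+1, c at position m
        have hjm : j = m + 1 := nodup_idx hndup hj hm2 (hjb.trans hb)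
        exact ⟨m, hm1, by omega, hc.symm⟩
  -- a removable edge forces: no labels, and the edge is the final edge
  have hedgecase : ∀ q ∈ P.edges, P.ConnectedAfterRemove (Sum.inr q) →
      P.labels = ∅ ∧ 2 ≤ vs.length ∧
        ∃ (h2n : vs.length - 2 < vs.length) (h1n : vs.length - 1 < vs.length),
          Joins q (vs[vs.length-2]'h2n) (vs[vs.length-1]'h1n) := by
    intro q hq hrem
    obtain ⟨i, u, w', hmu, hmw, hjq⟩ := hedge q hq
    obtain ⟨hi, hmu'⟩ := List.getElem?_eq_some_iff.1 hmu
    obtain ⟨hi1, hmw'⟩ := List.getElem?_eq_some_iff.1 hmw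
    subst hmu' hmw'
    have hlab : P.labels = ∅ := by
      by_contra hlab
      obtain ⟨p, hp⟩ := Set.nonempty_iff_ne_empty.2 hlab
      have hpl : vs.getLast? = some p.1 := hlast p hp
      have hn1 : vs.length - 1 < vs.length := by omega
      have hp1 : p.1 = vs[vs.length-1]'hn1 := by
        rw [List.getLast?_eq_getElem?, List.getElem?_eq_getElem hn1] at hpl
        exact (Option.some_inj.1 hpl).symm
      -- the labelled final vertex survives the removal of q
      have hvmem : vs[vs.length-1]'hn1 ∈ P.verts := by
        rw [hverts]
        exact List.getElem_mem hn1
      have hocc : Occupied (P.toLabeledGraph.delLabels (Sum.inr q))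
          (P.toLabeledGraph.delEdges (Sum.inr q)) (vs[vs.length-1]'hn1) :=
        Or.inl ⟨p.2, by rw [← hp1]; exact hp⟩
      have hvin : vs[vs.length-1]'hn1 ∈ (P.toLabeledGraph.removeElement (Sum.inr q)).verts :=
        ⟨hvmem, Or.inl hocc⟩
      have hrtg := hrem.2 _ hvin
      obtain ⟨j, hj, hjle, hjeq⟩ := hreach q hq i hi hi1 hjq _ (rtg_adjOn_symm hrtg)
      have : j = vs.length - 1 := nodup_idx hndup hj hn1 hjeq
      omega
    refine ⟨hlab, by omega, ?_⟩
    have hfin : i + 1 = vs.length - 1 := by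
      by_contra hin
      have hi2 : i + 2 < vs.length := by omega
      -- the vertex vs[i+1] survives: it has the next edge
      obtain ⟨g, ⟨hg, hjg⟩, _⟩ := huniq (i+1) (vs[i+1]'hi1) (vs[i+2]'hi2)
        (List.getElem?_eq_getElem hi1) (List.getElem?_eq_getElem hi2)
      have hgq : g ≠ q := by
        intro hEq
        subst hEq
        rcases joins_endpoint_cases hjq hjg with h | h
        · have := nodup_idx hndup hi hi1 h
          omega
        · have := nodup_idx hndup hi hi2 h
          omega
      have hocc : Occupied (P.toLabeledGraph.delLabels (Sum.inr q))
          (P.toLabeledGraph.delEdges (Sum.inr q)) (vs[i+1]'hi1) := by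
        refine occupied_of_edge (show g ∈ P.edges \ {q} from ⟨hg, hgq⟩) ?_
        rcases hjg with ⟨x1, _⟩ | ⟨_, x2⟩
        · exact Or.inl x1
        · exact Or.inr x2
      have hvmem : vs[i+1]'hi1 ∈ P.verts := by
        rw [hverts]
        exact List.getElem_mem hi1
      have hvin : vs[i+1]'hi1 ∈ (P.toLabeledGraph.removeElement (Sum.inr q)).verts :=
        ⟨hvmem, Or.inl hocc⟩
      have hrtg := hrem.2 _ hvin
      obtain ⟨j, hj, hjle, hjeq⟩ := hreach q hq i hi hi1 hjq _ (rtg_adjOn_symm hrtg)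
      have : j = i + 1 := nodup_idx hndup hj hi1 hjeq
      omega
    refine ⟨by omega, by omega, ?_⟩
    have e1 : vs[vs.length-2]'(by omega) = vs[i]'hi := getElem_idx_eq vs (by omega) _
    have e2 : vs[vs.length-1]'(by omega) = vs[i+1]'hi1 := getElem_idx_eq vs (by omega) _
    rw [e1, e2]
    exact hjq
  -- case analysis on the two removed elements
  cases e₁ with
  | inl p₁ =>
    cases e₂ with
    | inl p₂ => exact hne12 (congrArg Sum.inl (hsub h1 h2))
    | inr q₂ =>
      obtain ⟨hl0, -, -⟩ := hedgecase q₂ h2 hrem2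
      rw [show P.toLabeledGraph.HasElement (Sum.inl p₁) = (p₁ ∈ P.labels) from rfl, hl0] at h1
      exact h1
  | inr q₁ =>
    cases e₂ with
    | inl p₂ =>
      obtain ⟨hl0, -, -⟩ := hedgecase q₁ h1 hrem1
      rw [show P.toLabeledGraph.HasElement (Sum.inl p₂) = (p₂ ∈ P.labels) from rfl, hl0] at h2
      exact h2
    | inr q₂ =>
      obtain ⟨-, hn2, hna, hnb, hj1⟩ := hedgecase q₁ h1 hrem1
      obtain ⟨-, -, hna2, hnb2, hj2⟩ := hedgecase q₂ h2 hrem2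
      obtain ⟨q', hq', huq'⟩ := huniq (vs.length-2) (vs[vs.length-2]'hna) (vs[vs.length-1]'hnb)
        (List.getElem?_eq_getElem hna) (by
          rw [List.getElem?_eq_getElem (show vs.length - 2 + 1 < vs.length by omega)]
          exact congrArg some (getElem_idx_eq vs (by omega) _))
      have hq1 : q₁ = q' := huq' q₁ ⟨h1, hj1⟩
      have hq2 : q₂ = q' := huq' q₂ ⟨h2, hj2⟩
      exact hne12 (congrArg Sum.inr (hq1.trans hq2.symm))

end Level6


/-- A neighborhood pattern of finite size at least 2 is not
decomposable if and only if it is a path pattern. -/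
theorem not_decomposable_iff_isPathPattern {V SV SE : Type*}
    (P : PivotedGraph V SV SE) (hconn : P.Connected)
    (hL : P.labels.Finite) (hE : P.edges.Finite)
    (hsize : 2 ≤ P.toLabeledGraph.size) :
    ¬ P.Decomposable ↔ P.IsPathPattern := by
  exact ⟨forward_dir P hconn hL hE hsize, backward_dir P hsize⟩
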